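/- Let Ω ⊆ ℝ³ be open and let R : Ω → ℝ^{3×3} be differentiable with R(x) ∈ SO(3) for every x ∈ Ω. Define the wryness tensor Γ(x) := (axl(Rᵀ∂_{x_1}R) | axl(Rᵀ∂_{x_2}R) | axl(Rᵀ∂_{x_3}R))(x) ∈ ℝ^{3×3} and the second order dislocation density tensor α(x) := R(x)ᵀ (Curl R)(x). Then for every x ∈ Ω, α(x) = −Γ(x)ᵀ + tr(Γ(x))·𝟙₃. -/

import Mathlib

open Matrix

noncomputable section

/-- Partial derivative in the `k`-th coordinate direction of a scalar field on `ℝ³`. -/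
def pd (f : (Fin 3 → ℝ) → ℝ) (k : Fin 3) (x : Fin 3 → ℝ) : ℝ :=
  fderiv ℝ f x (Pi.single k 1)

/-- Entrywise partial derivative `∂_{x_k} R` of a matrix field. -/
def pderivM (R : (Fin 3 → ℝ) → Matrix (Fin 3) (Fin 3) ℝ) (k : Fin 3)
    (x : Fin 3 → ℝ) : Matrix (Fin 3) (Fin 3) ℝ :=
  Matrix.of fun i j => pd (fun y => R y i j) k x

/-- Row-wise Curl of a matrix field: the `i`-th row of `mcurl P x` is the
curl of the `i`-th row of `P` at `x`. -/
def mcurl (P : (Fin 3 → ℝ) → Matrix (Fin 3) (Fin 3) ℝ) (x : Fin 3 → ℝ) :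
    Matrix (Fin 3) (Fin 3) ℝ :=
  Matrix.of fun i =>
    ![pd (fun y => P y i 2) 1 x - pd (fun y => P y i 1) 2 x,
      pd (fun y => P y i 0) 2 x - pd (fun y => P y i 2) 0 x,
      pd (fun y => P y i 1) 0 x - pd (fun y => P y i 0) 1 x]

/-- Axial vector of a (skew-symmetric) 3×3 matrix. -/
def axl (A : Matrix (Fin 3) (Fin 3) ℝ) : Fin 3 → ℝ := ![A 2 1, A 0 2, A 1 0]

/-- The wryness tensor: columns are `axl(Rᵀ ∂_k R)`. -/
def wryness (R : (Fin 3 → ℝ) → Matrix (Fin 3) (Fin 3) ℝ) (x : Fin 3 → ℝ) :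
    Matrix (Fin 3) (Fin 3) ℝ :=
  Matrix.of fun i k => axl ((R x)ᵀ * pderivM R k x) i

set_option maxHeartbeats 2000000 in
theorem stmt_6 (Ω : Set (Fin 3 → ℝ)) (hΩ : IsOpen Ω)
    (R : (Fin 3 → ℝ) → Matrix (Fin 3) (Fin 3) ℝ)
    (hdiff : ∀ i j : Fin 3, DifferentiableOn ℝ (fun y => R y i j) Ω)
    (hSO : ∀ x ∈ Ω, (R x)ᵀ * R x = 1 ∧ (R x).det = 1) :
    ∀ x ∈ Ω,
      (R x)ᵀ * mcurl R x
        = -(wryness R x)ᵀ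
          + (Matrix.trace (wryness R x)) • (1 : Matrix (Fin 3) (Fin 3) ℝ) := by
  intro x hx
  have hR : ∀ i j : Fin 3, DifferentiableAt ℝ (fun y => R y i j) x :=
    fun i j => (hdiff i j).differentiableAt (hΩ.mem_nhds hx)
  have hskew : ∀ k i j : Fin 3,
      (∑ m, (R x m i * pd (fun y => R y m j) k x
           + R x m j * pd (fun y => R y m i) k x)) = 0 := by
    intro k i j
    have hg : (fun y => ∑ m, R y m i * R y m j)
        =ᶠ[nhds x] (fun _ => (1 : Matrix (Fin 3) (Fin 3) ℝ) i j) := by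
      filter_upwards [hΩ.mem_nhds hx] with y hy
      have h1 := (hSO y hy).1
      calc ∑ m, R y m i * R y m j = ((R y)ᵀ * R y) i j := by
            simp [Matrix.mul_apply, Matrix.transpose_apply]
        _ = (1 : Matrix (Fin 3) (Fin 3) ℝ) i j := by rw [h1]
    have hd0 : fderiv ℝ (fun y => ∑ m, R y m i * R y m j) x = 0 := by
      rw [hg.fderiv_eq]; simp
    have hsum : HasFDerivAt (fun y => ∑ m, R y m i * R y m j)
        (∑ m, (R x m i • fderiv ℝ (fun y => R y m j) x
             + R x m j • fderiv ℝ (fun y => R y m i) x)) x := by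
      apply HasFDerivAt.fun_sum
      intro m _
      exact (hR m i).hasFDerivAt.mul (hR m j).hasFDerivAt
    have := hsum.fderiv
    rw [hd0] at this
    have happ := congrArg (fun L : (Fin 3 → ℝ) →L[ℝ] ℝ => L (Pi.single k 1)) this.symm
    simpa [pd, Finset.sum_add_distrib] using happ
  have hskew' : ∀ k i j : Fin 3,
      (R x 0 i * pd (fun y => R y 0 j) k x + R x 1 i * pd (fun y => R y 1 j) k x
        + R x 2 i * pd (fun y => R y 2 j) k x)
      + (R x 0 j * pd (fun y => R y 0 i) k x + R x 1 j * pd (fun y => R y 1 i) k x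
        + R x 2 j * pd (fun y => R y 2 i) k x) = 0 := by
    intro k i j
    have := hskew k i j
    simp only [Fin.sum_univ_three] at this
    linarith
  ext i j
  fin_cases i <;> fin_cases j <;>
    simp only [Matrix.mul_apply, Matrix.transpose_apply, mcurl, wryness, pderivM, axl,
      Matrix.of_apply, Matrix.neg_apply, Matrix.add_apply, Matrix.smul_apply,
      Matrix.one_apply, Fin.reduceFinMk, Fin.reduceEq, reduceIte, Matrix.trace, Matrix.diag, Fin.sum_univ_three,
      Matrix.cons_val_zero, Matrix.cons_val_one, Matrix.head_cons,
      Matrix.cons_val_two, Matrix.tail_cons, Fin.isValue, smul_eq_mul,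
      if_true, if_false, mul_one, mul_zero, Fin.zero_eta, Fin.mk_one] <;>
  norm_num <;>
  linarith [hskew' 0 0 0, hskew' 0 0 1, hskew' 0 0 2, hskew' 0 1 1, hskew' 0 1 2,
    hskew' 0 2 2, hskew' 1 0 0, hskew' 1 0 1, hskew' 1 0 2, hskew' 1 1 1,
    hskew' 1 1 2, hskew' 1 2 2, hskew' 2 0 0, hskew' 2 0 1, hskew' 2 0 2,
    hskew' 2 1 1, hskew' 2 1 2, hskew' 2 2 2, hskew' 0 1 0, hskew' 0 2 0,
    hskew' 0 2 1, hskew' 1 1 0, hskew' 1 2 0, hskew' 1 2 1, hskew' 2 1 0,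
    hskew' 2 2 0, hskew' 2 2 1]
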